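/- The power graph and the enhanced power graph of a group G are equal if and only if G does not have a subgroup isomorphic to ℤ or to C_p × C_q for distinct primes p and q. -/

import Mathlib

open Subgroup

/-- The power graph of a group: `x ~ y` iff `x ≠ y` and one is a power of the other. -/
def powGraph (G : Type*) [Group G] : SimpleGraph G where
  Adj x y := x ≠ y ∧ (x ∈ zpowers y ∨ y ∈ zpowers x)
  symm := ⟨by rintro x y ⟨h1, h2⟩; exact ⟨h1.symm, h2.symm⟩⟩
  loopless := ⟨by rintro x ⟨h1, _⟩; exact h1 rfl⟩

/-- The enhanced power graph: `x ~ y` iff `x ≠ y` and `⟨x, y⟩` is cyclic. -/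
def epowGraph (G : Type*) [Group G] : SimpleGraph G where
  Adj x y := x ≠ y ∧ IsCyclic (closure ({x, y} : Set G))
  symm := ⟨by
    rintro x y ⟨h1, h2⟩
    refine ⟨h1.symm, ?_⟩
    rwa [Set.pair_comm y x]⟩
  loopless := ⟨by rintro x ⟨h1, _⟩; exact h1 rfl⟩

/-- The commuting graph: `x ~ y` iff `x ≠ y` and `x y = y x`. -/
def comGraph (G : Type*) [Group G] : SimpleGraph G where
  Adj x y := x ≠ y ∧ x * y = y * x
  symm := ⟨by rintro x y ⟨h1, h2⟩; exact ⟨h1.symm, h2.symm⟩⟩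
  loopless := ⟨by rintro x ⟨h1, _⟩; exact h1 rfl⟩

/-- `G` has a subgroup isomorphic to `H`. -/
def HasSubgroupIso (G : Type*) [Group G] (H : Type*) [Group H] : Prop :=
  ∃ K : Subgroup G, Nonempty (K ≃* H)

section Aux

variable {G : Type*} [Group G]

lemma aux_isCyclic_zpowers (g : G) : IsCyclic ↥(zpowers g) :=
  ⟨⟨g, mem_zpowers g⟩, by rintro ⟨x, k, rfl⟩; exact ⟨k, by ext; simp⟩⟩

/-- `⟨g⟩` is isomorphic to `Multiplicative (ZMod (orderOf g))`. -/
noncomputable def auxZModEquiv (g : G) :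
    Multiplicative (ZMod (orderOf g)) ≃* ↥(zpowers g) := by
  have e := zmodCyclicMulEquiv (aux_isCyclic_zpowers g)
  rwa [Nat.card_zpowers] at e

lemma aux_hasSubgroupIso_int {g : G} (h0 : orderOf g = 0) :
    HasSubgroupIso G (Multiplicative ℤ) := by
  refine ⟨zpowers g, ⟨?_⟩⟩
  have e := auxZModEquiv g
  rw [h0] at e
  exact e.symm

lemma aux_hasSubgroupIso_pq {g : G} {p q : ℕ} (hp : p.Prime) (hq : q.Prime) (hpq : p ≠ q)
    (h : orderOf g = p * q) : HasSubgroupIso G (Multiplicative (ZMod p × ZMod q)) := by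
  refine ⟨zpowers g, ⟨?_⟩⟩
  have e := auxZModEquiv g
  rw [h] at e
  have crt := ZMod.chineseRemainder ((Nat.coprime_primes hp hq).mpr hpq)
  exact e.symm.trans (AddEquiv.toMultiplicative crt.toAddEquiv)

lemma aux_gpow_gcd_mem_zpowers (g : G) (n b : ℕ) (hgn : g ^ n = 1) :
    g ^ (Nat.gcd n b) ∈ zpowers (g ^ b) := by
  have hb : ((Nat.gcd n b : ℤ)) = n * Nat.gcdA n b + b * Nat.gcdB n b := Nat.gcd_eq_gcd_ab n b
  refine ⟨Nat.gcdB n b, ?_⟩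
  show (g ^ b) ^ (Nat.gcdB n b) = g ^ Nat.gcd n b
  rw [← zpow_natCast g (Nat.gcd n b), hb, zpow_add, zpow_mul, zpow_mul, zpow_natCast,
    zpow_natCast, hgn, one_zpow, one_mul]

/-- In a finite cyclic group, divisibility of orders gives membership of cyclic subgroups. -/
lemma aux_mem_zpowers_of_dvd {g x y : G} (hg : orderOf g ≠ 0) (hx : x ∈ zpowers g)
    (hy : y ∈ zpowers g) (hd : orderOf x ∣ orderOf y) : x ∈ zpowers y := by
  have hgz : (orderOf g : ℤ) ≠ 0 := Int.natCast_ne_zero.mpr hg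
  obtain ⟨a, rfl⟩ : ∃ a : ℕ, g ^ a = x := by
    obtain ⟨i, rfl⟩ := hx
    exact ⟨(i % (orderOf g : ℤ)).toNat, by
      rw [← zpow_natCast, Int.toNat_of_nonneg (Int.emod_nonneg _ hgz), zpow_mod_orderOf]⟩
  obtain ⟨b, rfl⟩ : ∃ b : ℕ, g ^ b = y := by
    obtain ⟨i, rfl⟩ := hy
    exact ⟨(i % (orderOf g : ℤ)).toNat, by
      rw [← zpow_natCast, Int.toNat_of_nonneg (Int.emod_nonneg _ hgz), zpow_mod_orderOf]⟩
  rcases Nat.eq_zero_or_pos a with rfl | ha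
  · simpa using one_mem _
  rcases Nat.eq_zero_or_pos b with rfl | hb
  · rw [pow_zero, orderOf_one, Nat.dvd_one, orderOf_eq_one_iff] at hd
    rw [hd]; simpa using one_mem _
  rw [orderOf_pow' g ha.ne', orderOf_pow' g hb.ne'] at hd
  set n := orderOf g with hn
  have hd1 : Nat.gcd n a ∣ n := Nat.gcd_dvd_left n a
  have hd2 : Nat.gcd n b ∣ n := Nat.gcd_dvd_left n b
  have hnd1 : 0 < n / Nat.gcd n a :=
    Nat.div_pos (Nat.le_of_dvd (Nat.pos_of_ne_zero hg) hd1)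
      (Nat.gcd_pos_of_pos_left a (Nat.pos_of_ne_zero hg))
  have h21 : Nat.gcd n b ∣ Nat.gcd n a := by
    obtain ⟨k, hk⟩ := hd
    have e1 : Nat.gcd n b * (n / Nat.gcd n a * k) = n := by
      rw [← hk, Nat.mul_div_cancel' hd2]
    have e2 : Nat.gcd n a * (n / Nat.gcd n a) = n := Nat.mul_div_cancel' hd1
    have e3 : Nat.gcd n b * k * (n / Nat.gcd n a) = Nat.gcd n a * (n / Nat.gcd n a) := by
      rw [e2]
      conv_rhs => rw [← e1]
      ring
    exact ⟨k, (Nat.eq_of_mul_eq_mul_right hnd1 e3).symm⟩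
  obtain ⟨m, hm⟩ := h21.trans (Nat.gcd_dvd_right n a)
  have hmem := aux_gpow_gcd_mem_zpowers g n b (pow_orderOf_eq_one g)
  have hre : g ^ a = (g ^ Nat.gcd n b) ^ m := by rw [← pow_mul, ← hm]
  rw [hre]
  exact Subgroup.pow_mem _ hmem m

lemma aux_cyc_closure_pair {x y c : G} (hx : x ∈ zpowers c) (hy : y ∈ zpowers c)
    (hc : c ∈ closure ({x, y} : Set G)) : IsCyclic ↥(closure ({x, y} : Set G)) := by
  have heq : closure ({x, y} : Set G) = zpowers c := by
    refine le_antisymm ((closure_le _).mpr ?_) (zpowers_le.mpr hc)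
    rintro z (rfl | rfl) <;> assumption
  rw [heq]
  exact aux_isCyclic_zpowers c

end Aux

theorem powGraph_eq_epowGraph_iff {G : Type*} [Group G] :
    powGraph G = epowGraph G ↔
      ¬ (HasSubgroupIso G (Multiplicative ℤ) ∨
        ∃ p q : ℕ, p.Prime ∧ q.Prime ∧ p ≠ q ∧
          HasSubgroupIso G (Multiplicative (ZMod p × ZMod q))) := by
  constructor
  · intro h
    rintro (⟨K, ⟨e⟩⟩ | ⟨p, q, hp, hq, hpq, K, ⟨e⟩⟩)
    · -- subgroup isomorphic to ℤ
      set g0 : K := e.symm (Multiplicative.ofAdd (1 : ℤ)) with hg0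
      set g : G := (g0 : G) with hgdef
      have h1 : addOrderOf (1 : ℤ) = 0 := by
        rw [addOrderOf_eq_zero_iff']
        intro n hn hcon
        simp only [nsmul_eq_mul, mul_one] at hcon
        exact_mod_cast hn.ne' (by exact_mod_cast hcon)
      have h0 : orderOf g = 0 := by
        rw [hgdef, Subgroup.orderOf_coe, hg0, MulEquiv.orderOf_eq,
          orderOf_ofAdd_eq_addOrderOf, h1]
      have hg1 : g ≠ 1 := by
        intro hc
        rw [hc, orderOf_one] at h0
        exact one_ne_zero h0
      have hne : g ^ 2 ≠ g ^ 3 := by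
        intro hc
        apply hg1
        have : g ^ 2 * 1 = g ^ 2 * g := by
          rw [mul_one, ← pow_succ]; exact hc
        exact (mul_left_cancel this).symm
      have hcmem : g ∈ closure ({g ^ 2, g ^ 3} : Set G) := by
        have h2 : (g ^ 2 : G) ∈ closure ({g ^ 2, g ^ 3} : Set G) :=
          subset_closure (Set.mem_insert _ _)
        have h3 : (g ^ 3 : G) ∈ closure ({g ^ 2, g ^ 3} : Set G) :=
          subset_closure (Set.mem_insert_of_mem _ rfl)
        have hm := mul_mem (inv_mem h2) h3
        have hrepr : (g ^ 2)⁻¹ * g ^ 3 = g := by group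
        rwa [hrepr] at hm
      have hadj : (epowGraph G).Adj (g ^ 2) (g ^ 3) :=
        ⟨hne, aux_cyc_closure_pair (pow_mem (mem_zpowers g) 2) (pow_mem (mem_zpowers g) 3) hcmem⟩
      rw [← h] at hadj
      have hinj : Function.Injective (fun n : ℤ => g ^ n) :=
        injective_zpow_iff_not_isOfFinOrder.mpr (orderOf_eq_zero_iff.mp h0)
      rcases hadj.2 with ⟨k, hk⟩ | ⟨k, hk⟩
      · have : g ^ ((3 : ℤ) * k) = g ^ (2 : ℤ) := by
          rw [zpow_mul]; exact_mod_cast hk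
        have := hinj this
        omega
      · have : g ^ ((2 : ℤ) * k) = g ^ (3 : ℤ) := by
          rw [zpow_mul]; exact_mod_cast hk
        have := hinj this
        omega
    · -- subgroup isomorphic to C_p × C_q
      have hcop : Nat.Coprime p q := (Nat.coprime_primes hp hq).mpr hpq
      set a0 : K := e.symm (Multiplicative.ofAdd ((1 : ZMod p), (0 : ZMod q))) with ha0
      set b0 : K := e.symm (Multiplicative.ofAdd ((0 : ZMod p), (1 : ZMod q))) with hb0
      set a : G := (a0 : G) with hadef
      set b : G := (b0 : G) with hbdef
      have hoa : orderOf a = p := by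
        rw [hadef, Subgroup.orderOf_coe, ha0, MulEquiv.orderOf_eq,
          orderOf_ofAdd_eq_addOrderOf, Prod.addOrderOf_mk, ZMod.addOrderOf_one,
          addOrderOf_zero, Nat.lcm_one_right]
      have hob : orderOf b = q := by
        rw [hbdef, Subgroup.orderOf_coe, hb0, MulEquiv.orderOf_eq,
          orderOf_ofAdd_eq_addOrderOf, Prod.addOrderOf_mk, ZMod.addOrderOf_one,
          addOrderOf_zero, Nat.lcm_one_left]
      have hcomm : Commute a b := by
        have : a0 * b0 = b0 * a0 := by
          rw [ha0, hb0, ← e.symm.map_mul, ← e.symm.map_mul, mul_comm]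
        have := congrArg (Subtype.val : K → G) this
        exact this
      have hne : a ≠ b := by
        intro hc
        rw [hc] at hoa
        rw [hoa] at hob
        exact hpq hob
      set c : G := a * b with hcdef
      have hoc : orderOf c = p * q := by
        rw [hcdef, hcomm.orderOf_mul_eq_mul_orderOf_of_coprime (by rw [hoa, hob]; exact hcop),
          hoa, hob]
      have hcq : c ^ q = a ^ q := by
        rw [hcdef, hcomm.mul_pow, ← hob, pow_orderOf_eq_one, mul_one]
      have hcp : c ^ p = b ^ p := by
        rw [hcdef, hcomm.mul_pow, ← hoa, pow_orderOf_eq_one, one_mul]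
      have hamem : a ∈ zpowers c := by
        have h1 : a ^ Nat.gcd p q ∈ zpowers (a ^ q) :=
          aux_gpow_gcd_mem_zpowers a p q (by rw [← hoa]; exact pow_orderOf_eq_one a)
        rw [hcop, pow_one, ← hcq] at h1
        exact (zpowers_le.mpr (Subgroup.pow_mem _ (mem_zpowers c) q)) h1
      have hbmem : b ∈ zpowers c := by
        have h1 : b ^ Nat.gcd q p ∈ zpowers (b ^ p) :=
          aux_gpow_gcd_mem_zpowers b q p (by rw [← hob]; exact pow_orderOf_eq_one b)
        rw [Nat.coprime_comm.mp hcop, pow_one, ← hcp] at h1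
        exact (zpowers_le.mpr (Subgroup.pow_mem _ (mem_zpowers c) p)) h1
      have hcmem : c ∈ closure ({a, b} : Set G) :=
        mul_mem (subset_closure (Set.mem_insert _ _))
          (subset_closure (Set.mem_insert_of_mem _ rfl))
      have hadj : (epowGraph G).Adj a b := ⟨hne, aux_cyc_closure_pair hamem hbmem hcmem⟩
      rw [← h] at hadj
      rcases hadj.2 with hmem | hmem
      · have := orderOf_dvd_of_mem_zpowers hmem
        rw [hoa, hob] at this
        exact hpq ((Nat.prime_dvd_prime_iff_eq hp hq).mp this)
      · have := orderOf_dvd_of_mem_zpowers hmem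
        rw [hoa, hob] at this
        exact hpq.symm ((Nat.prime_dvd_prime_iff_eq hq hp).mp this)
  · intro hns
    push_neg at hns
    obtain ⟨hA, hB⟩ := hns
    ext x y
    show (x ≠ y ∧ _) ↔ (x ≠ y ∧ _)
    constructor
    · rintro ⟨hne, hmem | hmem⟩
      · exact ⟨hne, aux_cyc_closure_pair hmem (mem_zpowers y)
          (subset_closure (Set.mem_insert_of_mem _ rfl))⟩
      · exact ⟨hne, aux_cyc_closure_pair (mem_zpowers x) hmem
          (subset_closure (Set.mem_insert _ _))⟩
    · rintro ⟨hne, hcyc⟩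
      refine ⟨hne, ?_⟩
      obtain ⟨⟨g, hg⟩, hgen⟩ := hcyc.exists_generator
      have hx' : x ∈ zpowers g := by
        obtain ⟨k, hk⟩ := hgen ⟨x, subset_closure (Set.mem_insert _ _)⟩
        exact ⟨k, by simpa using congrArg Subtype.val hk⟩
      have hy' : y ∈ zpowers g := by
        obtain ⟨k, hk⟩ := hgen ⟨y, subset_closure (Set.mem_insert_of_mem _ rfl)⟩
        exact ⟨k, by simpa using congrArg Subtype.val hk⟩
      rcases Nat.eq_zero_or_pos (orderOf g) with h0 | hpos
      · exact absurd (aux_hasSubgroupIso_int h0) hA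
      have hgne : orderOf g ≠ 0 := hpos.ne'
      by_contra hcon
      push_neg at hcon
      obtain ⟨hxy, hyx⟩ := hcon
      have hdxy : ¬ orderOf x ∣ orderOf y := fun hd => hxy (aux_mem_zpowers_of_dvd hgne hx' hy' hd)
      have hdyx : ¬ orderOf y ∣ orderOf x := fun hd => hyx (aux_mem_zpowers_of_dvd hgne hy' hx' hd)
      have hxd : orderOf x ∣ orderOf g := orderOf_dvd_of_mem_zpowers hx'
      have hyd : orderOf y ∣ orderOf g := orderOf_dvd_of_mem_zpowers hy'
      have hxne : orderOf x ≠ 0 := fun h => hgne (by rwa [h, zero_dvd_iff] at hxd)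
      have hyne : orderOf y ≠ 0 := fun h => hgne (by rwa [h, zero_dvd_iff] at hyd)
      have hnle1 : ¬ (orderOf x).factorization ≤ (orderOf y).factorization := by
        rw [Nat.factorization_le_iff_dvd hxne hyne]; exact hdxy
      have hnle2 : ¬ (orderOf y).factorization ≤ (orderOf x).factorization := by
        rw [Nat.factorization_le_iff_dvd hyne hxne]; exact hdyx
      rw [Finsupp.le_def] at hnle1 hnle2
      push_neg at hnle1 hnle2
      obtain ⟨p, hp⟩ := hnle1
      obtain ⟨q, hq⟩ := hnle2
      have hpmem : p ∈ (orderOf x).primeFactors := by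
        rw [← Nat.support_factorization]; exact Finsupp.mem_support_iff.mpr (by omega)
      have hqmem : q ∈ (orderOf y).primeFactors := by
        rw [← Nat.support_factorization]; exact Finsupp.mem_support_iff.mpr (by omega)
      have hpp : p.Prime := Nat.prime_of_mem_primeFactors hpmem
      have hqq : q.Prime := Nat.prime_of_mem_primeFactors hqmem
      have hpq : p ≠ q := by rintro rfl; omega
      have hpdvd : p ∣ orderOf g := (Nat.dvd_of_mem_primeFactors hpmem).trans hxd
      have hqdvd : q ∣ orderOf g := (Nat.dvd_of_mem_primeFactors hqmem).trans hyd
      have hpqdvd : p * q ∣ orderOf g :=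
        Nat.Coprime.mul_dvd_of_dvd_of_dvd ((Nat.coprime_primes hpp hqq).mpr hpq) hpdvd hqdvd
      set m := orderOf g / (p * q) with hm
      have hmne : m ≠ 0 := by
        have := Nat.div_pos (Nat.le_of_dvd hpos hpqdvd)
          (Nat.mul_pos hpp.pos hqq.pos)
        exact this.ne'
      have hoc : orderOf (g ^ m) = p * q := by
        rw [orderOf_pow' g hmne, hm, Nat.gcd_eq_right (Nat.div_dvd_of_dvd hpqdvd),
          Nat.div_div_self hpqdvd hgne]
      exact hB p q hpp hqq hpq (aux_hasSubgroupIso_pq hpp hqq hpq hoc)
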